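/- For 0 < q < p ≤ 1 and natural numbers m, n ≥ 1, the (p,q)-Beta function satisfies B_{p,q}(m, n+1) = p^{n-1} B_{p,q}(m, n) - q^n B_{p,q}(m+1, n). -/

import Mathlib

noncomputable section

/-- The (p,q)-number [n]_{p,q} = (p^n - q^n)/(p - q). -/
def pqNum (p q : ℝ) (n : ℕ) : ℝ := (p ^ n - q ^ n) / (p - q)

/-- The (p,q)-factorial [n]_{p,q}!. -/
def pqFactorial (p q : ℝ) (n : ℕ) : ℝ := ∏ k ∈ Finset.range n, pqNum p q (k + 1)

/-- The (p,q)-binomial coefficient. -/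
def pqBinom (p q : ℝ) (n k : ℕ) : ℝ :=
  pqFactorial p q n / (pqFactorial p q (n - k) * pqFactorial p q k)

/-- The (p,q)-power basis (a ⊖ b)^n_{p,q} = ∏_{j=0}^{n-1} (p^j a - q^j b). -/
def pqPow (p q a b : ℝ) (n : ℕ) : ℝ := ∏ j ∈ Finset.range n, (p ^ j * a - q ^ j * b)

/-- The (p,q)-derivative. -/
def pqDeriv (p q : ℝ) (f : ℝ → ℝ) (x : ℝ) : ℝ := (f (p * x) - f (q * x)) / ((p - q) * x)

/-- The (p,q)-integral of f over [0,1] (case 0 < q < p). -/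
def pqInt (p q : ℝ) (f : ℝ → ℝ) : ℝ :=
  (p - q) * ∑' k : ℕ, (q ^ k / p ^ (k + 1)) * f (q ^ k / p ^ (k + 1))

/-- The (p,q)-Beta function B_{p,q}(m,n) = ∫₀¹ x^{m-1} (1 ⊖ qx)^{n-1} d_{p,q}x. -/
def pqBeta (p q : ℝ) (m n : ℕ) : ℝ :=
  pqInt p q (fun x => x ^ (m - 1) * pqPow p q 1 (q * x) (n - 1))

/-- The (p,q)-Gamma function: Γ_{p,q}(n+1) = [n]_{p,q}!. -/
def pqGamma (p q : ℝ) (n : ℕ) : ℝ := pqFactorial p q (n - 1)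

/-- The (p,q)-Bernstein basis b_{n,k}^{p,q}(1,x). -/
def bBasis (p q : ℝ) (n k : ℕ) (x : ℝ) : ℝ :=
  pqBinom p q n k * p ^ (k * (k - 1) / 2) / p ^ (n * (n - 1) / 2) * x ^ k *
    pqPow p q 1 x (n - k)

/-- The kernel b_{n,k}^{p,q}(t) = [n choose k] t^k (1 ⊖ qt)^{n-k}. -/
def bKernel (p q : ℝ) (n k : ℕ) (t : ℝ) : ℝ :=
  pqBinom p q n k * t ^ k * pqPow p q 1 (q * t) (n - k)

/-- The (p,q)-Bernstein operator B_{n,p,q}(f,x). -/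
def pqBernstein (p q : ℝ) (n : ℕ) (f : ℝ → ℝ) (x : ℝ) : ℝ :=
  ∑ k ∈ Finset.range (n + 1),
    bBasis p q n k x * f (p ^ (n - k) * pqNum p q k / pqNum p q n)

/-- The (p,q)-Bernstein-Durrmeyer operator D_n^{p,q}(f,x). -/
def pqDurrmeyer (p q : ℝ) (n : ℕ) (f : ℝ → ℝ) (x : ℝ) : ℝ :=
  pqNum p q (n + 1) *
    ∑ k ∈ Finset.Icc 1 n, (p ^ ((n - k + 1) * (n + k) / 2))⁻¹ * bBasis p q n k x *
      pqInt p q (fun t => bKernel p q n (k - 1) t * f t)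
  + bBasis p q n 0 x * f 0

lemma pqBeta_summand_summable (p q : ℝ) (hq : 0 < q) (hqp : q < p) (hp : p ≤ 1)
    (a b : ℕ) :
    Summable (fun k : ℕ => (q ^ k / p ^ (k + 1)) *
      ((q ^ k / p ^ (k + 1)) ^ a * pqPow p q 1 (q * (q ^ k / p ^ (k + 1))) b)) := by
  have hp0 : 0 < p := hq.trans hqp
  have hx : ∀ k : ℕ, q ^ k / p ^ (k + 1) ≤ 1 / p := by
    intro k
    rw [div_le_div_iff₀ (by positivity) hp0, pow_succ]
    nlinarith [pow_le_pow_left₀ hq.le hqp.le k, pow_pos hp0 k]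
  have hx0 : ∀ k : ℕ, 0 ≤ q ^ k / p ^ (k + 1) := fun k => by positivity
  apply Summable.of_norm_bounded
    (g := fun k => ((1 / p) ^ (a + 1) * ((p + 1) / p) ^ b) * (q / p) ^ k)
  · exact Summable.mul_left _ (summable_geometric_of_lt_one (by positivity)
      (by rw [div_lt_one hp0]; exact hqp))
  · intro k
    set x := q ^ k / p ^ (k + 1) with hxdef
    have hPb : |pqPow p q 1 (q * x) b| ≤ ((p + 1) / p) ^ b := by
      unfold pqPow
      rw [Finset.abs_prod]
      calc ∏ j ∈ Finset.range b, |p ^ j * 1 - q ^ j * (q * x)|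
          ≤ ∏ j ∈ Finset.range b, ((p + 1) / p) := by
            apply Finset.prod_le_prod (fun j _ => abs_nonneg _)
            intro j _
            have h1 : |p ^ j * 1 - q ^ j * (q * x)| ≤ |p ^ j * 1| + |q ^ j * (q * x)| :=
              abs_sub _ _
            have h2 : |p ^ j * 1| ≤ 1 := by
              rw [abs_of_nonneg (by positivity)]
              simpa using pow_le_one₀ hp0.le hp
            have h3 : |q ^ j * (q * x)| ≤ 1 / p := by
              rw [abs_of_nonneg (by positivity)]
              have hq1 : q ≤ 1 := hqp.le.trans hp
              have hqj : q ^ j ≤ 1 := pow_le_one₀ hq.le hq1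
              have := hx k
              have hx0' := hx0 k
              calc q ^ j * (q * x) ≤ 1 * (1 * x) := by
                    apply mul_le_mul hqj _ (by positivity) zero_le_one
                    exact mul_le_mul hq1 le_rfl hx0' zero_le_one
                _ = x := by ring
                _ ≤ 1 / p := this
            calc |p ^ j * 1 - q ^ j * (q * x)| ≤ 1 + 1 / p := by linarith
              _ = (p + 1) / p := by field_simp
        _ = ((p + 1) / p) ^ b := by rw [Finset.prod_const, Finset.card_range]
    have hxeq : x = (1 / p) * (q / p) ^ k := by
      rw [hxdef, pow_succ]
      field_simp
      rw [← mul_pow, mul_div_cancel₀ q hp0.ne']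
    have hxa : x ^ a ≤ (1 / p) ^ a := pow_le_pow_left₀ (hx0 k) (hx k) a
    rw [Real.norm_eq_abs, abs_mul, abs_mul, abs_of_nonneg (hx0 k),
      abs_of_nonneg (pow_nonneg (hx0 k) a)]
    calc x * (x ^ a * |pqPow p q 1 (q * x) b|)
        ≤ x * ((1 / p) ^ a * ((p + 1) / p) ^ b) :=
          mul_le_mul_of_nonneg_left
            (mul_le_mul hxa hPb (abs_nonneg _) (by positivity)) (hx0 k)
      _ = ((1 / p) ^ (a + 1) * ((p + 1) / p) ^ b) * (q / p) ^ k := by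
          rw [hxeq]; ring

theorem pqBeta_succ (p q : ℝ) (hq : 0 < q) (hqp : q < p) (hp : p ≤ 1)
    (m n : ℕ) (hm : 1 ≤ m) (hn : 1 ≤ n) :
    pqBeta p q m (n + 1) =
      p ^ (n - 1) * pqBeta p q m n - q ^ n * pqBeta p q (m + 1) n := by
  obtain ⟨m', rfl⟩ : ∃ m', m = m' + 1 := ⟨m - 1, (Nat.succ_pred_eq_of_pos hm).symm⟩
  obtain ⟨n', rfl⟩ : ∃ n', n = n' + 1 := ⟨n - 1, (Nat.succ_pred_eq_of_pos hn).symm⟩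
  set F : ℕ → ℕ → ℕ → ℝ := fun a b k => (q ^ k / p ^ (k + 1)) *
    ((q ^ k / p ^ (k + 1)) ^ a * pqPow p q 1 (q * (q ^ k / p ^ (k + 1))) b) with hF
  have hBeta : ∀ a b : ℕ, pqBeta p q (a + 1) (b + 1) = (p - q) * ∑' k, F a b k := by
    intro a b
    simp only [pqBeta, pqInt, hF, Nat.add_sub_cancel]
  have hkey : ∀ k : ℕ, F m' (n' + 1) k =
      p ^ n' * F m' n' k - q ^ (n' + 1) * F (m' + 1) n' k := by
    intro k
    simp only [hF, pqPow, Finset.prod_range_succ]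
    ring
  rw [hBeta, hBeta, hBeta]
  simp only [Nat.add_sub_cancel]
  have hs1 := pqBeta_summand_summable p q hq hqp hp m' n'
  have hs2 := pqBeta_summand_summable p q hq hqp hp (m' + 1) n'
  rw [show (fun k => F m' (n' + 1) k) = fun k =>
      p ^ n' * F m' n' k - q ^ (n' + 1) * F (m' + 1) n' k from funext hkey,
    (hs1.mul_left _).tsum_sub (hs2.mul_left _), tsum_mul_left, tsum_mul_left]
  ring
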